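/- Let f : ℝ → ℝ satisfy |f(x)-f(y)| ≤ M|x-y|^σ for |x-y| ≤ 1, σ ∈ [0,1], α ∈ (0,2), and define F_t(x) = (2√π t^{1/α})^{-1} ∫_ℝ exp(-z² t^{-2/α}) f(x-z) dz. Then for every T > 0 there is a constant C depending only on σ, α, T such that F_t is Lipschitz with Lipschitz constant at most C · M · t^{(σ-1)/α} for all t ∈ (0,T]. -/

import Mathlib

open MeasureTheory
open Real


lemma chain_nat (f : ℝ → ℝ) (M σ : ℝ) (hM : 0 ≤ M) (hσ0 : 0 ≤ σ)
    (hf : ∀ x y : ℝ, |x - y| ≤ 1 → |f x - f y| ≤ M * |x - y| ^ σ) :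
    ∀ n : ℕ, ∀ x y : ℝ, |x - y| ≤ n + 1 → |f x - f y| ≤ M * (n + 1) := by
  intro n
  induction n with
  | zero =>
    intro x y hxy
    simp only [Nat.cast_zero, zero_add] at hxy ⊢
    calc |f x - f y| ≤ M * |x - y| ^ σ := hf x y hxy
      _ ≤ M * 1 := by
          gcongr
          exact Real.rpow_le_one (abs_nonneg _) hxy hσ0
  | succ n ih =>
    intro x y hxy
    by_cases h1 : |x - y| ≤ n + 1
    · calc |f x - f y| ≤ M * (n + 1) := ih x y h1
        _ ≤ M * (↑(n+1) + 1) := by push_cast; nlinarith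
    · push_neg at h1
      set d := |x - y| with hd
      have hd0 : (0:ℝ) < d := lt_of_le_of_lt (by positivity) h1
      have h1le : (1:ℝ) ≤ d := le_trans (by nlinarith [Nat.cast_nonneg (α := ℝ) n]) h1.le
      set w : ℝ := x - (x - y) / d with hw
      have hxw : |x - w| = 1 := by
        rw [hw, show x - (x - (x-y)/d) = (x-y)/d by ring, abs_div, ← hd, abs_of_pos hd0,
          div_self hd0.ne']
      have hwy : |w - y| ≤ n + 1 := by
        have hwy' : w - y = (x - y) * ((d - 1)/d) := by rw [hw]; field_simp; ring
        rw [hwy', abs_mul, ← hd, abs_of_nonneg (div_nonneg (by linarith) hd0.le)]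
        have he : d * ((d - 1) / d) = d - 1 := by field_simp
        rw [he]
        have : d ≤ (n:ℝ) + 1 + 1 := by push_cast at hxy; linarith
        linarith
      calc |f x - f y| = |(f x - f w) + (f w - f y)| := by ring_nf
        _ ≤ |f x - f w| + |f w - f y| := abs_add_le _ _
        _ ≤ M * |x - w| ^ σ + M * (n + 1) := by
            gcongr
            · exact hf x w (le_of_eq hxw)
            · exact ih w y hwy
        _ ≤ M * 1 + M * (n+1) := by
            gcongr
            exact Real.rpow_le_one (abs_nonneg _) (le_of_eq hxw) hσ0
        _ ≤ M * (↑(n+1) + 1) := by push_cast; nlinarith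

lemma chain (f : ℝ → ℝ) (M σ : ℝ) (hM : 0 ≤ M) (hσ0 : 0 ≤ σ) (hσ1 : σ ≤ 1)
    (hf : ∀ x y : ℝ, |x - y| ≤ 1 → |f x - f y| ≤ M * |x - y| ^ σ) :
    ∀ x y : ℝ, |f x - f y| ≤ M * (|x - y| ^ σ + 2 * |x - y|) := by
  intro x y
  by_cases h1 : |x - y| ≤ 1
  · calc |f x - f y| ≤ M * |x - y| ^ σ := hf x y h1
      _ ≤ M * (|x - y| ^ σ + 2 * |x - y|) := by nlinarith [abs_nonneg (x - y), Real.rpow_nonneg (abs_nonneg (x-y)) σ]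
  · push_neg at h1
    set d := |x - y| with hd
    have hd0 : (0:ℝ) ≤ d := abs_nonneg _
    have h2 : d ≤ (⌊d⌋₊ : ℝ) + 1 := (Nat.lt_floor_add_one d).le
    have h3 : (⌊d⌋₊ : ℝ) ≤ d := Nat.floor_le hd0
    calc |f x - f y| ≤ M * (⌊d⌋₊ + 1) := chain_nat f M σ hM hσ0 hf ⌊d⌋₊ x y h2
      _ ≤ M * (2 * d) := by nlinarith
      _ ≤ M * (d ^ σ + 2 * d) := by nlinarith [Real.rpow_nonneg hd0 σ]

lemma exp_diff_le (a b : ℝ) : |Real.exp (-a) - Real.exp (-b)| ≤ |a - b| * (Real.exp (-a) + Real.exp (-b)) := by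
  rcases le_total a b with h | h
  · have h1 : Real.exp (-b) ≤ Real.exp (-a) := Real.exp_le_exp.mpr (by linarith)
    rw [abs_of_nonneg (by linarith), abs_of_nonpos (by linarith)]
    have h2 : Real.exp (-b) = Real.exp (-a) * Real.exp (a - b) := by
      rw [← Real.exp_add]; ring_nf
    have h3 : 1 - Real.exp (a - b) ≤ b - a := by
      nlinarith [Real.add_one_le_exp (a - b)]
    nlinarith [Real.exp_pos (-a), Real.exp_pos (-b)]
  · have h1 : Real.exp (-a) ≤ Real.exp (-b) := Real.exp_le_exp.mpr (by linarith)
    rw [abs_of_nonpos (by linarith), abs_of_nonneg (by linarith)]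
    have h2 : Real.exp (-a) = Real.exp (-b) * Real.exp (b - a) := by
      rw [← Real.exp_add]; ring_nf
    have h3 : 1 - Real.exp (b - a) ≤ a - b := by
      nlinarith [Real.add_one_le_exp (b - a)]
    nlinarith [Real.exp_pos (-a), Real.exp_pos (-b)]

/-- r^σ ≤ s^σ + s^(σ-1) r -/
lemma rpow_split (σ s r : ℝ) (hσ0 : 0 ≤ σ) (hσ1 : σ ≤ 1) (hs : 0 < s) (hr : 0 ≤ r) :
    r ^ σ ≤ s ^ σ + s ^ (σ - 1) * r := by
  rcases le_total r s with h | h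
  · have : r ^ σ ≤ s ^ σ := Real.rpow_le_rpow hr h hσ0
    nlinarith [Real.rpow_nonneg hs.le (σ - 1)]
  · have hr0 : 0 < r := lt_of_lt_of_le hs h
    have h1 : r ^ σ = r ^ (σ - 1) * r := by
      rw [← Real.rpow_add_one hr0.ne']; ring_nf
    have h2 : r ^ (σ - 1) ≤ s ^ (σ - 1) := Real.rpow_le_rpow_of_nonpos hs h (by linarith)
    rw [h1]
    nlinarith [Real.rpow_nonneg hs.le σ]

/-- |z| e^{-z²c} ≤ s e^{-z²c/2} when c = 1/(2s²)-ish; general: c>0, s with c*s^2 ≥ 1/4 ... 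
   specialize: |z| * exp (-z^2*c) ≤ s * exp(-z^2*(c/2)) provided s^2 * c ≥ 1/2. -/
lemma abs_mul_exp_le (c s z : ℝ) (hc : 0 < c) (hs : 0 < s) (hcs : 1/2 ≤ s^2 * c) :
    |z| * Real.exp (-z^2*c) ≤ s * Real.exp (-z^2*(c/2)) := by
  have key : |z| ≤ s * Real.exp (z^2*(c/2)) := by
    have h1 : 1 + z^2*(c/2) ≤ Real.exp (z^2*(c/2)) := by
      nlinarith [Real.add_one_le_exp (z^2*(c/2))]
    have h3 : s * |z| ≤ s^2 + s^2*c*(z^2/2) := by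
      nlinarith [sq_nonneg (2*s - |z|), sq_abs z, sq_nonneg z]
    have h2 : |z| ≤ s * (1 + z^2*(c/2)) := by
      rw [← mul_le_mul_iff_right₀ hs]; nlinarith
    calc |z| ≤ s * (1 + z^2*(c/2)) := h2
      _ ≤ s * Real.exp (z^2*(c/2)) := by nlinarith
  calc |z| * Real.exp (-z^2*c) ≤ (s * Real.exp (z^2*(c/2))) * Real.exp (-z^2*c) := by
        nlinarith [Real.exp_pos (-z^2*c)]
    _ = s * Real.exp (-z^2*(c/2)) := by rw [mul_assoc, ← Real.exp_add]; ring_nf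

lemma sq_mul_exp_le (c s z : ℝ) (hc : 0 < c) (hs : 0 < s) (hcs : 1/2 ≤ s^2 * c) :
    z^2 * Real.exp (-z^2*c) ≤ 4 * s^2 * Real.exp (-z^2*(c/2)) := by
  have key : z^2 ≤ 4 * s^2 * Real.exp (z^2*(c/2)) := by
    have h1 : z^2*(c/2) ≤ Real.exp (z^2*(c/2)) := by
      nlinarith [Real.add_one_le_exp (z^2*(c/2))]
    nlinarith [sq_nonneg z, Real.exp_pos (z^2*(c/2))]
  calc z^2 * Real.exp (-z^2*c) ≤ (4*s^2 * Real.exp (z^2*(c/2))) * Real.exp (-z^2*c) := by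
        nlinarith [Real.exp_pos (-z^2*c)]
    _ = 4*s^2 * Real.exp (-z^2*(c/2)) := by rw [mul_assoc, ← Real.exp_add]; ring_nf

lemma integrable_of_le_gauss {g : ℝ → ℝ} (b : ℝ) (hb : 0 < b)
    (hg : AEStronglyMeasurable g volume) (C : ℝ)
    (h : ∀ z, |g z| ≤ C * Real.exp (-z^2 * b)) : Integrable g := by
  refine Integrable.mono' (g := fun z => C * Real.exp (-b * z^2)) ?_ hg ?_
  · exact (integrable_exp_neg_mul_sq hb).const_mul C
  · refine Filter.Eventually.of_forall fun z => ?_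
    have := h z
    rw [Real.norm_eq_abs]
    calc |g z| ≤ C * Real.exp (-z^2*b) := this
      _ = C * Real.exp (-b*z^2) := by ring_nf

lemma rpow_le_one_add (σ r : ℝ) (hσ0 : 0 ≤ σ) (hσ1 : σ ≤ 1) (hr : 0 ≤ r) :
    r ^ σ ≤ 1 + r := by
  rcases le_total r 1 with h | h
  · nlinarith [Real.rpow_le_one hr h hσ0]
  · calc r ^ σ ≤ r ^ (1:ℝ) := Real.rpow_le_rpow_of_exponent_le h hσ1
      _ = r := Real.rpow_one r
      _ ≤ 1 + r := by linarith

lemma integrable_kernel_mul {f : ℝ → ℝ} (hmf : Measurable f) {M σ : ℝ} (hM : 0 ≤ M)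
    (hσ0 : 0 ≤ σ) (hσ1 : σ ≤ 1)
    (hch : ∀ x y : ℝ, |f x - f y| ≤ M * (|x - y| ^ σ + 2 * |x - y|))
    (b : ℝ) (hb : 0 < b) (w : ℝ) :
    Integrable (fun z => Real.exp (-z^2*b) * f (w - z)) := by
  set s' : ℝ := b⁻¹ + 1 with hs'
  have hs'0 : 0 < s' := by positivity
  have hcs : 1/2 ≤ s'^2 * b := by
    rw [hs']
    have hbi : b⁻¹ * b = 1 := inv_mul_cancel₀ hb.ne'
    nlinarith [sq_nonneg b⁻¹, inv_pos.mpr hb]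
  refine integrable_of_le_gauss (b/2) (by positivity) ?_ (|f w| + M + 3 * M * s') ?_
  · apply Measurable.aestronglyMeasurable; fun_prop
  intro z
  have hfz : |f (w - z)| ≤ |f w| + M * (|z|^σ + 2*|z|) := by
    have h1 := hch (w - z) w
    have h2 : |w - z - w| = |z| := by rw [show w - z - w = -z by ring, abs_neg]
    rw [h2] at h1
    calc |f (w-z)| = |f w + (f (w-z) - f w)| := by ring_nf
      _ ≤ |f w| + |f (w-z) - f w| := abs_add_le _ _
      _ ≤ |f w| + M * (|z|^σ + 2*|z|) := by
          have : |f (w-z) - f w| = |f (w - z) - f w| := rfl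
          nlinarith [abs_sub_comm (f (w-z)) (f w), h1]
  have hrσ : |z|^σ ≤ 1 + |z| := rpow_le_one_add σ |z| hσ0 hσ1 (abs_nonneg z)
  have hexp : (0:ℝ) < Real.exp (-z^2*b) := Real.exp_pos _
  have hexp2 : Real.exp (-z^2*b) ≤ Real.exp (-z^2*(b/2)) := by
    apply Real.exp_le_exp.mpr; nlinarith [sq_nonneg z]
  have hz : |z| * Real.exp (-z^2*b) ≤ s' * Real.exp (-z^2*(b/2)) :=
    abs_mul_exp_le b s' z hb hs'0 hcs
  have habs : |Real.exp (-z^2*b) * f (w-z)| = Real.exp (-z^2*b) * |f (w-z)| := by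
    rw [abs_mul, abs_of_pos hexp]
  rw [habs]
  calc Real.exp (-z^2*b) * |f (w-z)|
      ≤ Real.exp (-z^2*b) * (|f w| + M * ((1 + |z|) + 2*|z|)) := by
        apply mul_le_mul_of_nonneg_left _ hexp.le
        nlinarith [abs_nonneg z]
    _ = (|f w| + M) * Real.exp (-z^2*b) + 3*M*(|z| * Real.exp (-z^2*b)) := by ring
    _ ≤ (|f w| + M) * Real.exp (-z^2*(b/2)) + 3*M*(s' * Real.exp (-z^2*(b/2))) := by
        have n1 : (0:ℝ) ≤ |f w| + M := by positivity
        have n2 : (0:ℝ) ≤ 3 * M := by positivity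
        exact add_le_add (mul_le_mul_of_nonneg_left hexp2 n1) (mul_le_mul_of_nonneg_left hz n2)
    _ = (|f w| + M + 3*M*s') * Real.exp (-z^2*(b/2)) := by ring

section test
variable (dummy : ℕ)

set_option maxHeartbeats 1000000 in
lemma ptwise_main (σ s b h z d M S₁ : ℝ) (hσ0 : 0 ≤ σ) (hσ1 : σ ≤ 1) (hs : 0 < s)
    (hb : b = (s^2)⁻¹) (hh : |h| ≤ s) (hM : 0 ≤ M)
    (hd : |d| ≤ M * (|z|^σ + 2*|z|)) (hS₁ : 1 ≤ S₁) (hs1 : s^(1-σ) ≤ S₁) :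
    |(Real.exp (-(z+h)^2*b) - Real.exp (-z^2*b)) * d|
      ≤ 120 * S₁ * b * M * |h| * s^(σ+1) * Real.exp (-z^2*(b/4)) := by
  have hb0 : 0 < b := by rw [hb]; positivity
  have hsb : s^2 * b = 1 := by rw [hb]; field_simp
  set E₂ := Real.exp (-z^2*(b/2)) with hE₂
  set E₄ := Real.exp (-z^2*(b/4)) with hE₄
  have hE₂0 : 0 < E₂ := Real.exp_pos _
  have hE₄0 : 0 < E₄ := Real.exp_pos _
  have hE24 : E₂ ≤ E₄ := by
    apply Real.exp_le_exp.mpr; nlinarith [sq_nonneg z]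
  -- step 1 : kernel difference bound
  have hK1 : Real.exp (-(z+h)^2*b) ≤ 3 * E₂ := by
    have h1 : -(z+h)^2*b ≤ 1 + -z^2*(b/2) := by
      have h2 : z^2/2 - h^2 ≤ (z+h)^2 := by nlinarith [sq_nonneg (z + 2*h)]
      have h3 : h^2 * b ≤ 1 := by
        nlinarith [sq_abs h, abs_nonneg h, mul_le_mul hh hh (abs_nonneg h) hs.le, hb0]
      nlinarith
    calc Real.exp (-(z+h)^2*b) ≤ Real.exp (1 + -z^2*(b/2)) := Real.exp_le_exp.mpr h1
      _ = Real.exp 1 * E₂ := by rw [Real.exp_add]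
      _ ≤ 3 * E₂ := by nlinarith [Real.exp_one_lt_d9]
  have hK2 : Real.exp (-z^2*b) ≤ E₂ := by
    apply Real.exp_le_exp.mpr; nlinarith [sq_nonneg z]
  have hKdiff : |Real.exp (-(z+h)^2*b) - Real.exp (-z^2*b)|
      ≤ b * (|h| * (2*|z| + s)) * (4 * E₂) := by
    have h1 := exp_diff_le ((z+h)^2*b) (z^2*b)
    rw [show -((z+h)^2*b) = -(z+h)^2*b by ring, show -(z^2*b) = -z^2*b by ring] at h1
    have h2 : |(z+h)^2*b - z^2*b| = b * |h * (2*z+h)| := by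
      rw [show (z+h)^2*b - z^2*b = b * (h * (2*z+h)) by ring, abs_mul, abs_of_pos hb0]
    have h3 : |h * (2*z+h)| ≤ |h| * (2*|z| + s) := by
      rw [abs_mul]
      have : |2*z+h| ≤ 2*|z| + s := by
        calc |2*z+h| ≤ |2*z| + |h| := abs_add_le _ _
          _ ≤ 2*|z| + s := by rw [abs_mul]; simp; linarith
      exact mul_le_mul_of_nonneg_left this (abs_nonneg h)
    have h4 : Real.exp (-(z+h)^2*b) + Real.exp (-z^2*b) ≤ 4 * E₂ := by linarith
    calc |Real.exp (-(z+h)^2*b) - Real.exp (-z^2*b)|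
        ≤ |(z+h)^2*b - z^2*b| * (Real.exp (-(z+h)^2*b) + Real.exp (-z^2*b)) := h1
      _ ≤ (b * (|h| * (2*|z| + s))) * (4 * E₂) := by
          rw [h2]
          apply mul_le_mul
          · exact mul_le_mul_of_nonneg_left h3 hb0.le
          · exact h4
          · positivity
          · positivity
  -- step 2 : d bound refined
  set P : ℝ := s^(σ-1) + 2 with hP
  have hP0 : 0 < P := by have := Real.rpow_pos_of_pos hs (σ-1); rw [hP]; linarith
  have hd2 : |d| ≤ M * (s^σ + P * |z|) := by
    calc |d| ≤ M * (|z|^σ + 2*|z|) := hd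
      _ ≤ M * (s^σ + P * |z|) := by
          have := rpow_split σ s |z| hσ0 hσ1 hs (abs_nonneg z)
          apply mul_le_mul_of_nonneg_left _ hM
          rw [hP]; nlinarith
  -- step 3 : moment bounds
  have hhalf : 1/2 ≤ s^2 * (b/2) := by rw [hb]; rw [mul_comm]; rw [div_mul_eq_mul_div,
    inv_mul_cancel₀ (by positivity : (s:ℝ)^2 ≠ 0)]
  have hmom1 : |z| * E₂ ≤ s * E₄ := by
    have h0 := abs_mul_exp_le (b/2) s z (by positivity) hs hhalf
    rw [show b/2/2 = b/4 by ring] at h0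
    exact h0
  have hmom2 : z^2 * E₂ ≤ 4 * s^2 * E₄ := by
    have h0 := sq_mul_exp_le (b/2) s z (by positivity) hs hhalf
    rw [show b/2/2 = b/4 by ring] at h0
    exact h0
  -- step 4 : rpow arithmetic
  have hr1 : s^σ * s = s^(σ+1) := (Real.rpow_add_one hs.ne' σ).symm
  have hr2 : s^(σ-1) * s = s^σ := by
    rw [← Real.rpow_add_one hs.ne' (σ-1)]; ring_nf
  have hr3 : s^2 ≤ S₁ * s^(σ+1) := by
    have e1 : s^(σ+1) * s^(1-σ) = s^2 := by
      rw [← Real.rpow_add hs]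
      rw [show σ+1+(1-σ) = 2 by ring]
      rw [show (2:ℝ) = ((2:ℕ):ℝ) by norm_num, Real.rpow_natCast]
    have h2 : 0 < s^(σ+1) := Real.rpow_pos_of_pos hs _
    nlinarith
  have hsp1 : 0 < s^(σ+1) := Real.rpow_pos_of_pos hs _
  have hPs : P * s^2 ≤ (1 + 2*S₁) * s^(σ+1) := by
    rw [hP]
    have e1 : s^(σ-1) * s^2 = s^(σ+1) := by
      rw [show (s:ℝ)^2 = s * s by ring, ← mul_assoc, hr2, hr1]
    nlinarith
  -- step 5 : assemble
  have key : (2*|z| + s) * (s^σ + P * |z|) * E₂ ≤ 30 * S₁ * s^(σ+1) * E₄ := by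
    have expand : (2*|z| + s) * (s^σ + P * |z|) * E₂
        = 2*s^σ*(|z| * E₂) + 2*P*(z^2*E₂) + s^σ*s*E₂ + s*P*(|z| * E₂) := by
      rw [← sq_abs z]; ring
    rw [expand]
    have hsσ : 0 < s^σ := Real.rpow_pos_of_pos hs _
    have t1 : 2*s^σ*(|z| * E₂) ≤ 2*s^(σ+1)*E₄ := by
      calc 2*s^σ*(|z| * E₂) ≤ 2*s^σ*(s*E₄) := by
            apply mul_le_mul_of_nonneg_left hmom1; positivity
        _ = 2*s^(σ+1)*E₄ := by rw [← hr1]; ring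
    have t2 : 2*P*(z^2*E₂) ≤ 8*(P*s^2)*E₄ := by
      calc 2*P*(z^2*E₂) ≤ 2*P*(4*s^2*E₄) := by
            apply mul_le_mul_of_nonneg_left hmom2; positivity
        _ = 8*(P*s^2)*E₄ := by ring
    have t3 : s^σ*s*E₂ ≤ s^(σ+1)*E₄ := by
      rw [hr1]
      apply mul_le_mul_of_nonneg_left hE24 hsp1.le
    have t4 : s*P*(|z| * E₂) ≤ (P*s^2)*E₄ := by
      calc s*P*(|z| * E₂) ≤ s*P*(s*E₄) := by
            apply mul_le_mul_of_nonneg_left hmom1; positivity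
        _ = (P*s^2)*E₄ := by ring
    have hPs' : 9*((P*s^2)*E₄) ≤ 9*((1+2*S₁)*s^(σ+1)*E₄) := by
      have := mul_le_mul_of_nonneg_right hPs hE₄0.le
      nlinarith
    have hfin : (0:ℝ) ≤ (S₁ - 1) * (s^(σ+1) * E₄) :=
      mul_nonneg (by linarith) (mul_pos hsp1 hE₄0).le
    nlinarith [hsp1, hE₄0, hfin, mul_pos hsp1 hE₄0]
  calc |(Real.exp (-(z+h)^2*b) - Real.exp (-z^2*b)) * d|
      = |Real.exp (-(z+h)^2*b) - Real.exp (-z^2*b)| * |d| := abs_mul _ _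
    _ ≤ (b * (|h| * (2*|z| + s)) * (4 * E₂)) * (M * (s^σ + P * |z|)) := by
        apply mul_le_mul hKdiff hd2 (abs_nonneg d); positivity
    _ = (4*b*M*|h|) * ((2*|z| + s) * (s^σ + P * |z|) * E₂) := by ring
    _ ≤ (4*b*M*|h|) * (30 * S₁ * s^(σ+1) * E₄) := by
        apply mul_le_mul_of_nonneg_left key; positivity
    _ = 120 * S₁ * b * M * |h| * s^(σ+1) * E₄ := by ring

end test

lemma integrable_gauss' (β : ℝ) (hβ : 0 < β) :
    Integrable (fun z : ℝ => Real.exp (-z^2*β)) := by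
  have h0 := integrable_exp_neg_mul_sq hβ
  simpa [show ∀ z:ℝ, -β*z^2 = -z^2*β from fun z => by ring] using h0

lemma gauss_val (β : ℝ) (hβ : 0 < β) :
    (∫ z : ℝ, Real.exp (-z^2*β)) = Real.sqrt (Real.pi/β) := by
  have h0 := integral_gaussian β
  simpa [show ∀ z:ℝ, -β*z^2 = -z^2*β from fun z => by ring] using h0

set_option maxHeartbeats 1000000 in
lemma master_big (σ : ℝ) (hσ0 : 0 ≤ σ) (hσ1 : σ ≤ 1) (S₁ : ℝ) (hS₁1 : (1:ℝ) ≤ S₁)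
    (f : ℝ → ℝ) (M : ℝ) (hmf : Measurable f) (hM : 0 ≤ M)
    (hch : ∀ x y : ℝ, |f x - f y| ≤ M * (|x - y| ^ σ + 2 * |x - y|))
    (s : ℝ) (hs : 0 < s) (hsS₁ : s ≤ S₁) (x y : ℝ) (hbig : s < |x - y|) :
    |(2 * Real.sqrt Real.pi * s)⁻¹ * (∫ z : ℝ, Real.exp (-z^2 * (s^2)⁻¹) * f (x - z))
      - (2 * Real.sqrt Real.pi * s)⁻¹ * (∫ z : ℝ, Real.exp (-z^2 * (s^2)⁻¹) * f (y - z))|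
      ≤ 120 * S₁ * M * s ^ (σ - 1) * |x - y| := by
  have hS₁0 : (0:ℝ) < S₁ := by linarith
  set b : ℝ := (s^2)⁻¹ with hbdef
  have hb0 : 0 < b := by rw [hbdef]; positivity
  have hsqrtπ : 0 < Real.sqrt Real.pi := Real.sqrt_pos.mpr Real.pi_pos
  set c : ℝ := 2 * Real.sqrt Real.pi * s with hcdef
  have hc0 : 0 < c := by rw [hcdef]; positivity
  have hKint : Integrable (fun z : ℝ => Real.exp (-z^2*b)) := integrable_gauss' b hb0
  have hIx := integrable_kernel_mul hmf hM hσ0 hσ1 hch b hb0 x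
  have hIy := integrable_kernel_mul hmf hM hσ0 hσ1 hch b hb0 y
  have hKval : (∫ z : ℝ, Real.exp (-z^2*b)) = Real.sqrt Real.pi * s := by
    rw [gauss_val b hb0, hbdef,
      show Real.pi / ((s^2)⁻¹) = Real.pi * s^2 from by field_simp,
      Real.sqrt_mul Real.pi_pos.le, Real.sqrt_sq hs.le]
  have hsp : 0 < s^(σ-1) := Real.rpow_pos_of_pos hs _
  set h := x - y with hhdef
  have hhpos : 0 < |h| := lt_trans hs hbig
  have key : (c⁻¹ * ∫ z : ℝ, Real.exp (-z^2*b) * f (x - z))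
        - (c⁻¹ * ∫ z : ℝ, Real.exp (-z^2*b) * f (y - z))
      = c⁻¹ * ∫ z : ℝ, (Real.exp (-z^2*b) * f (x - z) - Real.exp (-z^2*b) * f (y - z)) := by
    rw [← mul_sub, ← integral_sub hIx hIy]
  rw [key]
  have hptw : ∀ z : ℝ, |Real.exp (-z^2*b) * f (x - z) - Real.exp (-z^2*b) * f (y - z)|
      ≤ (M * (|h|^σ + 2*|h|)) * Real.exp (-z^2*b) := by
    intro z
    have h1 := hch (x - z) (y - z)
    rw [show x - z - (y - z) = h from by rw [hhdef]; ring] at h1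
    rw [show Real.exp (-z^2*b) * f (x-z) - Real.exp (-z^2*b) * f (y-z)
        = Real.exp (-z^2*b) * (f (x-z) - f (y-z)) from by ring, abs_mul,
      abs_of_pos (Real.exp_pos _)]
    calc Real.exp (-z^2*b) * |f (x-z) - f (y-z)|
        ≤ Real.exp (-z^2*b) * (M * (|h|^σ + 2*|h|)) :=
          mul_le_mul_of_nonneg_left h1 (Real.exp_pos _).le
      _ = (M * (|h|^σ + 2*|h|)) * Real.exp (-z^2*b) := by ring
  have hintbound : |∫ z : ℝ, (Real.exp (-z^2*b) * f (x - z) - Real.exp (-z^2*b) * f (y - z))|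
      ≤ (M * (|h|^σ + 2*|h|)) * (Real.sqrt Real.pi * s) := by
    have habs := norm_integral_le_integral_norm (μ := volume) (fun z : ℝ =>
      Real.exp (-z^2*b) * f (x - z) - Real.exp (-z^2*b) * f (y - z))
    simp only [Real.norm_eq_abs] at habs
    calc |∫ z : ℝ, (Real.exp (-z^2*b) * f (x - z) - Real.exp (-z^2*b) * f (y - z))|
        ≤ ∫ z : ℝ, |Real.exp (-z^2*b) * f (x - z) - Real.exp (-z^2*b) * f (y - z)| := habs
      _ ≤ ∫ z : ℝ, (M * (|h|^σ + 2*|h|)) * Real.exp (-z^2*b) :=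
          integral_mono (hIx.sub hIy).abs (hKint.const_mul _) hptw
      _ = (M * (|h|^σ + 2*|h|)) * (Real.sqrt Real.pi * s) := by
          rw [MeasureTheory.integral_const_mul, hKval]
  have e1 : |h|^σ ≤ s^(σ-1) * |h| := by
    rw [show |h|^σ = |h|^(σ-1) * |h| from by
      rw [← Real.rpow_add_one hhpos.ne' (σ-1)]; ring_nf]
    exact mul_le_mul_of_nonneg_right
      (Real.rpow_le_rpow_of_nonpos hs hbig.le (by linarith)) hhpos.le
  have e2 : (2:ℝ) ≤ 2 * S₁ * s^(σ-1) := by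
    have f1 : S₁^(σ-1) ≤ s^(σ-1) :=
      Real.rpow_le_rpow_of_nonpos hs hsS₁ (by linarith)
    have f2 : S₁^(1-σ) ≤ S₁ := by
      calc S₁^(1-σ) ≤ S₁^(1:ℝ) := Real.rpow_le_rpow_of_exponent_le hS₁1 (by linarith)
        _ = S₁ := Real.rpow_one _
    have f3 : S₁^(1-σ) * S₁^(σ-1) = 1 := by
      rw [← Real.rpow_add hS₁0]; norm_num
    nlinarith [Real.rpow_pos_of_pos hS₁0 (σ-1), Real.rpow_pos_of_pos hS₁0 (1-σ), hsp]
  have hhalf : c⁻¹ * ((M * (|h|^σ + 2*|h|)) * (Real.sqrt Real.pi * s))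
      = M * (|h|^σ + 2*|h|) / 2 := by
    rw [hcdef]; field_simp
  calc |c⁻¹ * ∫ z : ℝ, (Real.exp (-z^2*b) * f (x - z) - Real.exp (-z^2*b) * f (y - z))|
      = c⁻¹ * |∫ z : ℝ, (Real.exp (-z^2*b) * f (x - z) - Real.exp (-z^2*b) * f (y - z))| := by
        rw [abs_mul, abs_of_pos (inv_pos.mpr hc0)]
    _ ≤ c⁻¹ * ((M * (|h|^σ + 2*|h|)) * (Real.sqrt Real.pi * s)) :=
        mul_le_mul_of_nonneg_left hintbound (inv_pos.mpr hc0).le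
    _ = M * (|h|^σ + 2*|h|) / 2 := hhalf
    _ ≤ 120 * S₁ * M * s^(σ-1) * |h| := by
        have g1 : M * |h|^σ ≤ M * (s^(σ-1) * |h|) := mul_le_mul_of_nonneg_left e1 hM
        have g2 : M * (2 * |h|) ≤ M * ((2 * S₁ * s^(σ-1)) * |h|) :=
          mul_le_mul_of_nonneg_left (mul_le_mul_of_nonneg_right e2 hhpos.le) hM
        nlinarith [mul_nonneg hM (mul_nonneg hsp.le hhpos.le),
          mul_nonneg hM (mul_nonneg (mul_nonneg (by linarith : (0:ℝ) ≤ 2*S₁) hsp.le) hhpos.le),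
          mul_nonneg (mul_nonneg hM hsp.le) hhpos.le]

set_option maxHeartbeats 1000000 in
lemma master_small (σ : ℝ) (hσ0 : 0 ≤ σ) (hσ1 : σ ≤ 1) (S₁ : ℝ) (hS₁1 : (1:ℝ) ≤ S₁)
    (f : ℝ → ℝ) (M : ℝ) (hmf : Measurable f) (hM : 0 ≤ M)
    (hch : ∀ x y : ℝ, |f x - f y| ≤ M * (|x - y| ^ σ + 2 * |x - y|))
    (s : ℝ) (hs : 0 < s) (hs1σ : s^(1-σ) ≤ S₁) (x y : ℝ) (hsmall : |x - y| ≤ s) :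
    |(2 * Real.sqrt Real.pi * s)⁻¹ * (∫ z : ℝ, Real.exp (-z^2 * (s^2)⁻¹) * f (x - z))
      - (2 * Real.sqrt Real.pi * s)⁻¹ * (∫ z : ℝ, Real.exp (-z^2 * (s^2)⁻¹) * f (y - z))|
      ≤ 120 * S₁ * M * s ^ (σ - 1) * |x - y| := by
  set b : ℝ := (s^2)⁻¹ with hbdef
  have hb0 : 0 < b := by rw [hbdef]; positivity
  have hsqrtπ : 0 < Real.sqrt Real.pi := Real.sqrt_pos.mpr Real.pi_pos
  set c : ℝ := 2 * Real.sqrt Real.pi * s with hcdef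
  have hc0 : 0 < c := by rw [hcdef]; positivity
  have hKint : Integrable (fun z : ℝ => Real.exp (-z^2*b)) := integrable_gauss' b hb0
  have hIy := integrable_kernel_mul hmf hM hσ0 hσ1 hch b hb0 y
  set h := x - y with hhdef
  have E1 : (∫ z : ℝ, Real.exp (-z^2*b) * f (x - z))
      = ∫ z : ℝ, Real.exp (-(z+h)^2*b) * f (y - z) := by
    have h0 := MeasureTheory.integral_add_right_eq_self (μ := volume)
      (fun u : ℝ => Real.exp (-u^2*b) * f (x - u)) h
    rw [← h0]
    congr 1; funext z
    rw [show x - (z + h) = y - z from by rw [hhdef]; ring]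
  have hI3 : Integrable (fun z : ℝ => Real.exp (-(z+h)^2*b) * f (y - z)) := by
    have h1 := (integrable_kernel_mul hmf hM hσ0 hσ1 hch b hb0 (y + h)).comp_add_right h
    simpa [show ∀ t:ℝ, y + h - (t+h) = y - t from fun t => by ring] using h1
  have hIKh : Integrable (fun z : ℝ => Real.exp (-(z+h)^2*b)) := by
    have h1 := hKint.comp_add_right h
    simpa using h1
  have E0 : (∫ z : ℝ, Real.exp (-(z+h)^2*b)) = ∫ z : ℝ, Real.exp (-z^2*b) := by
    have h0 := MeasureTheory.integral_add_right_eq_self (μ := volume)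
      (fun u : ℝ => Real.exp (-u^2*b)) h
    exact h0
  have hzero : (∫ z : ℝ, (Real.exp (-(z+h)^2*b) - Real.exp (-z^2*b)) * f y) = 0 := by
    rw [show (fun z : ℝ => (Real.exp (-(z+h)^2*b) - Real.exp (-z^2*b)) * f y)
        = fun z : ℝ => Real.exp (-(z+h)^2*b) * f y - Real.exp (-z^2*b) * f y
        from funext fun z => by ring]
    rw [integral_sub (hIKh.mul_const (f y)) (hKint.mul_const (f y)),
      MeasureTheory.integral_mul_const, MeasureTheory.integral_mul_const, E0, sub_self]
  have key : (c⁻¹ * ∫ z : ℝ, Real.exp (-z^2*b) * f (x - z))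
        - (c⁻¹ * ∫ z : ℝ, Real.exp (-z^2*b) * f (y - z))
      = c⁻¹ * ∫ z : ℝ, (Real.exp (-(z+h)^2*b) - Real.exp (-z^2*b)) * (f (y - z) - f y) := by
    rw [E1, ← mul_sub]
    congr 1
    rw [show (fun z : ℝ => (Real.exp (-(z+h)^2*b) - Real.exp (-z^2*b)) * (f (y - z) - f y))
        = fun z : ℝ => (Real.exp (-(z+h)^2*b) * f (y-z) - Real.exp (-z^2*b) * f (y-z))
            - (Real.exp (-(z+h)^2*b) - Real.exp (-z^2*b)) * f y from funext fun z => by ring]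
    have hIdc : Integrable (fun z : ℝ => (Real.exp (-(z+h)^2*b) - Real.exp (-z^2*b)) * f y) := by
      have h1 := (hIKh.sub hKint).mul_const (f y)
      simpa [Pi.sub_apply] using h1
    have hIdd : Integrable (fun z : ℝ =>
        Real.exp (-(z+h)^2*b) * f (y-z) - Real.exp (-z^2*b) * f (y-z)) := by
      have h1 := hI3.sub hIy
      exact h1
    rw [integral_sub hIdd hIdc, hzero, sub_zero, integral_sub hI3 hIy]
  rw [key]
  have hI4 : Integrable (fun z : ℝ => Real.exp (-z^2*(b/4))) :=
    integrable_gauss' (b/4) (by positivity)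
  have hG : Integrable (fun z : ℝ =>
      (Real.exp (-(z+h)^2*b) - Real.exp (-z^2*b)) * (f (y - z) - f y)) := by
    rw [show (fun z : ℝ => (Real.exp (-(z+h)^2*b) - Real.exp (-z^2*b)) * (f (y - z) - f y))
        = fun z : ℝ => (Real.exp (-(z+h)^2*b) * f (y-z) - Real.exp (-z^2*b) * f (y-z))
            - (Real.exp (-(z+h)^2*b) - Real.exp (-z^2*b)) * f y from funext fun z => by ring]
    have hIdc : Integrable (fun z : ℝ => (Real.exp (-(z+h)^2*b) - Real.exp (-z^2*b)) * f y) := by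
      have h1 := (hIKh.sub hKint).mul_const (f y)
      simpa [Pi.sub_apply] using h1
    have hIdd : Integrable (fun z : ℝ =>
        Real.exp (-(z+h)^2*b) * f (y-z) - Real.exp (-z^2*b) * f (y-z)) := by
      have h1 := hI3.sub hIy
      exact h1
    have h2 := hIdd.sub hIdc
    exact h2
  have hs1σ' : s^(1-σ) ≤ S₁ := hs1σ
  have hptw : ∀ z : ℝ, |(Real.exp (-(z+h)^2*b) - Real.exp (-z^2*b)) * (f (y - z) - f y)|
      ≤ (120 * S₁ * b * M * |h| * s^(σ+1)) * Real.exp (-z^2*(b/4)) := by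
    intro z
    have hdz : |f (y - z) - f y| ≤ M * (|z|^σ + 2*|z|) := by
      have h1 := hch (y - z) y
      rw [show y - z - y = -z from by ring, abs_neg] at h1; exact h1
    have h2 := ptwise_main σ s b h z (f (y-z) - f y) M S₁ hσ0 hσ1 hs hbdef hsmall hM hdz hS₁1 hs1σ'
    calc |(Real.exp (-(z+h)^2*b) - Real.exp (-z^2*b)) * (f (y - z) - f y)|
        ≤ 120 * S₁ * b * M * |h| * s^(σ+1) * Real.exp (-z^2*(b/4)) := h2
      _ = (120 * S₁ * b * M * |h| * s^(σ+1)) * Real.exp (-z^2*(b/4)) := by ring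
  have hDint : Integrable (fun z : ℝ =>
      (120 * S₁ * b * M * |h| * s^(σ+1)) * Real.exp (-z^2*(b/4))) :=
    hI4.const_mul _
  have hIval : (∫ z : ℝ, Real.exp (-z^2*(b/4))) = 2 * Real.sqrt Real.pi * s := by
    rw [gauss_val (b/4) (by positivity),
      show Real.pi / (b/4) = (2*s)^2 * Real.pi from by rw [hbdef]; field_simp; ring,
      Real.sqrt_mul (sq_nonneg (2*s)), Real.sqrt_sq (by positivity : (0:ℝ) ≤ 2*s)]
    ring
  have hintbound : |∫ z : ℝ, (Real.exp (-(z+h)^2*b) - Real.exp (-z^2*b)) * (f (y - z) - f y)|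
      ≤ (120 * S₁ * b * M * |h| * s^(σ+1)) * (2 * Real.sqrt Real.pi * s) := by
    have habs := norm_integral_le_integral_norm (μ := volume) (fun z : ℝ =>
      (Real.exp (-(z+h)^2*b) - Real.exp (-z^2*b)) * (f (y - z) - f y))
    simp only [Real.norm_eq_abs] at habs
    calc |∫ z : ℝ, (Real.exp (-(z+h)^2*b) - Real.exp (-z^2*b)) * (f (y - z) - f y)|
        ≤ ∫ z : ℝ, |(Real.exp (-(z+h)^2*b) - Real.exp (-z^2*b)) * (f (y - z) - f y)| := habs
      _ ≤ ∫ z : ℝ, (120 * S₁ * b * M * |h| * s^(σ+1)) * Real.exp (-z^2*(b/4)) :=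
          integral_mono hG.abs hDint hptw
      _ = (120 * S₁ * b * M * |h| * s^(σ+1)) * (2 * Real.sqrt Real.pi * s) := by
          rw [MeasureTheory.integral_const_mul, hIval]
  have hfinal : c⁻¹ * ((120 * S₁ * b * M * |h| * s^(σ+1)) * (2 * Real.sqrt Real.pi * s))
      = 120 * S₁ * M * s^(σ-1) * |h| := by
    have e1 : s^(σ-1) * s^2 = s^(σ+1) := by
      rw [show (s:ℝ)^2 = s * s from by ring, ← mul_assoc,
        ← Real.rpow_add_one hs.ne' (σ-1), show σ-1+1 = σ from by ring,
        ← Real.rpow_add_one hs.ne' σ]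
    have e2 : b * s^(σ+1) = s^(σ-1) := by
      rw [hbdef, ← e1]
      field_simp
    rw [hcdef, mul_comm (120 * S₁ * b * M * |h| * s^(σ+1)) (2 * Real.sqrt Real.pi * s),
      ← mul_assoc, inv_mul_cancel₀ (by positivity : (2 * Real.sqrt Real.pi * s) ≠ 0), one_mul]
    linear_combination (120 * S₁ * M * |h|) * e2
  calc |c⁻¹ * ∫ z : ℝ, (Real.exp (-(z+h)^2*b) - Real.exp (-z^2*b)) * (f (y - z) - f y)|
      = c⁻¹ * |∫ z : ℝ, (Real.exp (-(z+h)^2*b) - Real.exp (-z^2*b)) * (f (y - z) - f y)| := by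
        rw [abs_mul, abs_of_pos (inv_pos.mpr hc0)]
    _ ≤ c⁻¹ * ((120 * S₁ * b * M * |h| * s^(σ+1)) * (2 * Real.sqrt Real.pi * s)) :=
        mul_le_mul_of_nonneg_left hintbound (inv_pos.mpr hc0).le
    _ = 120 * S₁ * M * s^(σ-1) * |h| := hfinal


/-- Gaussian mollification `F_t(x) = (2√π t^{1/α})⁻¹ ∫ exp(-z² t^{-2/α}) f(x-z) dz`. -/
noncomputable def moll (α : ℝ) (f : ℝ → ℝ) (t x : ℝ) : ℝ :=
  (2 * Real.sqrt Real.pi * t ^ (1 / α))⁻¹ *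
    ∫ z : ℝ, Real.exp (-z ^ 2 * t ^ (-2 / α)) * f (x - z)

theorem stmt10 (σ α T : ℝ) (hσ0 : 0 ≤ σ) (hσ1 : σ ≤ 1) (hα0 : 0 < α) (hα2 : α < 2)
    (hT : 0 < T) :
    ∃ C > 0, ∀ (f : ℝ → ℝ) (M : ℝ), Measurable f → 0 ≤ M →
      (∀ x y : ℝ, |x - y| ≤ 1 → |f x - f y| ≤ M * |x - y| ^ σ) →
      ∀ t ∈ Set.Ioc (0:ℝ) T, ∀ x y : ℝ,
        |moll α f t x - moll α f t y| ≤ C * M * t ^ ((σ - 1) / α) * |x - y| := by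
  set S : ℝ := T ^ (1/α) with hSdef
  have hS0 : 0 < S := Real.rpow_pos_of_pos hT _
  set S₁ : ℝ := max 1 S with hS₁def
  have hS₁1 : (1:ℝ) ≤ S₁ := le_max_left _ _
  refine ⟨120 * S₁, by positivity, ?_⟩
  intro f M hmf hM hf t ht x y
  obtain ⟨ht0, htT⟩ := ht
  have hch := chain f M σ hM hσ0 hσ1 hf
  set s : ℝ := t ^ (1/α) with hsdef
  have hs0 : 0 < s := Real.rpow_pos_of_pos ht0 _
  have hsS : s ≤ S := Real.rpow_le_rpow ht0.le htT (by positivity)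
  have hsS₁ : s ≤ S₁ := le_trans hsS (le_max_right _ _)
  have hbeq : t ^ (-2/α) = (s^2)⁻¹ := by
    rw [hsdef, ← Real.rpow_natCast (t ^ (1/α)) 2, ← Real.rpow_mul ht0.le,
      ← Real.rpow_neg ht0.le]
    congr 1; push_cast; ring
  have hseq : t ^ ((σ-1)/α) = s ^ (σ-1) := by
    rw [hsdef, ← Real.rpow_mul ht0.le]
    congr 1; ring
  have hs1σ : s^(1-σ) ≤ S₁ := by
    rcases le_total s 1 with hh | hh
    · exact le_trans (Real.rpow_le_one hs0.le hh (by linarith)) hS₁1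
    · calc s^(1-σ) ≤ s^(1:ℝ) := Real.rpow_le_rpow_of_exponent_le hh (by linarith)
        _ = s := Real.rpow_one s
        _ ≤ S₁ := hsS₁
  simp only [moll]
  rw [hbeq, ← hsdef, hseq]
  rcases le_or_gt |x - y| s with hc | hc
  · exact master_small σ hσ0 hσ1 S₁ hS₁1 f M hmf hM hch s hs0 hs1σ x y hc
  · exact master_big σ hσ0 hσ1 S₁ hS₁1 f M hmf hM hch s hs0 hsS₁ x y hc
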